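/- Let m ≥ 2, n_1, …, n_m ≥ 1 be integers, n = n_1 + ⋯ + n_m, and let a_{j,l}^{(k)} be any integers. For every p with 1 ≤ p ≤ m−1 the following identity holds in ℤ^n: u_p^0 + u_p^1 + ⋯ + u_p^{n_p} = ∑_{q=1}^{m−p} ( (−μ(b_{p,q})) · u_{p+q}^0 + ∑_{k=1}^{n_{p+q}} (b_{p,q}^{(k)} − μ(b_{p,q})) · u_{p+q}^k ). (This is the primitive relation for the primitive collection P_p = {u_p^0, …, u_p^{n_p}} of the fan of the generalized Bott manifold.) -/
import Mathlib


/-- The lattice `ℤ^n` with `n = n_0 + ⋯ + n_{m-1}`, presented as functions on pairs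
`(j, k)` with `j` a stage (0-indexed) and `k < n j`. -/
abbrev GBModule (m : ℕ) (n : ℕ → ℕ) : Type :=
  (j : Fin m) → Fin (n j.1) → ℤ

/-- The standard basis vector `e_j^k` of `ℤ^n`. -/
def gbE (m : ℕ) (n : ℕ → ℕ) (j : Fin m) (k : Fin (n j.1)) : GBModule m n :=
  Pi.single j (Pi.single k (1 : ℤ))

/-- `μ(x) = min {0, x_0, …, x_{N-1}}` for a vector `x ∈ ℤ^N` (components 0-indexed). -/
def gbmu (N : ℕ) (x : ℕ → ℤ) : ℤ :=
  Finset.fold min 0 x (Finset.range N)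

lemma gbE_apply (m : ℕ) (n : ℕ → ℕ) (j j' : Fin m) (k : Fin (n j.1)) (k' : Fin (n j'.1)) :
    gbE m n j k j' k' = if j'.1 = j.1 ∧ k'.1 = k.1 then 1 else 0 := by
  unfold gbE
  rcases eq_or_ne j' j with h | h
  · subst h
    rw [Pi.single_eq_same, Pi.single_apply]
    simp [Fin.ext_iff, eq_comm]
  · rw [Pi.single_eq_of_ne h, Pi.zero_apply]
    have hv : j'.1 ≠ j.1 := fun hh => h (Fin.ext hh)
    simp [hv]

lemma sum_ite_fin (N : ℕ) (K : ℕ) (hK : K < N) (f : ℕ → ℤ) :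
    ∑ k : Fin N, (if K = k.1 then f k.1 else 0) = f K := by
  rw [Fin.sum_univ_eq_sum_range (fun i => if K = i then f i else 0) N, Finset.sum_ite_eq]
  simp [hK]

lemma sum_smul_gbE_apply (m : ℕ) (n : ℕ → ℕ) (l j : Fin m) (k₀ : Fin (n j.1)) (f : ℕ → ℤ) :
    (∑ k : Fin (n l.1), f k.1 • gbE m n l k) j k₀ = if j.1 = l.1 then f k₀.1 else 0 := by
  simp only [Finset.sum_apply, Pi.smul_apply, gbE_apply, smul_eq_mul, mul_ite, mul_one, mul_zero]
  by_cases h : j.1 = l.1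
  · simp only [h, true_and, if_pos]
    exact sum_ite_fin _ _ (h ▸ k₀.2) f
  · simp [h]

lemma sum_gbE_apply (m : ℕ) (n : ℕ → ℕ) (l j : Fin m) (k₀ : Fin (n j.1)) :
    (∑ k : Fin (n l.1), gbE m n l k) j k₀ = if j.1 = l.1 then 1 else 0 := by
  have := sum_smul_gbE_apply m n l j k₀ (fun _ => 1)
  simpa using this

/-- For the data of a generalized Bott manifold (stages indexed by `0, …, m-1`),
with `b_{p,q}` defined recursively by `b_{p,1} = a_{p+1,p}` and
`b_{p,q} = a_{p+q,p} + ∑_{r=1}^{q-1} μ(b_{p,r}) a_{p+q,p+r}`, the primitive relation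
`u_p^0 + ⋯ + u_p^{n_p} = ∑_{q} ((−μ(b_{p,q})) u_{p+q}^0 + ∑_k (b_{p,q}^{(k)} − μ(b_{p,q})) u_{p+q}^k)`
holds in `ℤ^n` for every `p` with `p + 1 < m`. -/
theorem stmt_2 (m : ℕ) (hm : 2 ≤ m) (n : ℕ → ℕ) (hn : ∀ j, j < m → 1 ≤ n j)
    (a : ℕ → ℕ → ℕ → ℤ)
    (u : (l : Fin m) → Fin (n l.1 + 1) → GBModule m n)
    (hu0 : ∀ l : Fin m,
      u l 0 = -(∑ k : Fin (n l.1), gbE m n l k) +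
        ∑ j ∈ Finset.univ.filter (fun j : Fin m => l < j),
          ∑ k : Fin (n j.1), a j.1 l.1 k.1 • gbE m n j k)
    (huk : ∀ (l : Fin m) (k : Fin (n l.1)), u l k.succ = gbE m n l k)
    (b : ℕ → ℕ → ℕ → ℤ)
    (hb1 : ∀ p k, p + 1 < m → k < n (p + 1) → b p 1 k = a (p + 1) p k)
    (hbq : ∀ p q k, 2 ≤ q → p + q < m → k < n (p + q) →
      b p q k = a (p + q) p k +
        ∑ r ∈ Finset.Icc 1 (q - 1), gbmu (n (p + r)) (b p r) * a (p + q) (p + r) k) :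
    ∀ (p : ℕ) (hp : p + 1 < m),
      ∑ k : Fin (n p + 1), u ⟨p, by omega⟩ k =
      ∑ q ∈ (Finset.Icc 1 (m - 1 - p)).attach,
        ((-(gbmu (n (p + q.1)) (b p q.1))) •
            u ⟨p + q.1, by have := Finset.mem_Icc.mp q.2; omega⟩ 0 +
          ∑ k : Fin (n (p + q.1)),
            (b p q.1 k.1 - gbmu (n (p + q.1)) (b p q.1)) •
              u ⟨p + q.1, by have := Finset.mem_Icc.mp q.2; omega⟩ k.succ) := by
  intro p hp
  funext j k₀
  have hfil : ∀ (l : Fin m),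
      (∑ j' ∈ Finset.univ.filter (fun j' : Fin m => l < j'),
        ∑ k : Fin (n j'.1), a j'.1 l.1 k.1 • gbE m n j' k) j k₀
      = if l.1 < j.1 then a j.1 l.1 k₀.1 else 0 := by
    intro l
    simp only [Finset.sum_apply]
    have h1 : ∀ j' : Fin m,
        (∑ k : Fin (n j'.1), (a j'.1 l.1 k.1 • gbE m n j' k) j k₀)
        = if j' = j then a j.1 l.1 k₀.1 else 0 := by
      intro j'
      have h2 := sum_smul_gbE_apply m n j' j k₀ (fun t => a j'.1 l.1 t)
      simp only [Finset.sum_apply] at h2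
      rw [h2]
      by_cases h : j' = j
      · subst h; simp
      · have : j.1 ≠ j'.1 := fun hh => h (Fin.ext hh.symm)
        simp [h, this]
    rw [Finset.sum_congr rfl (fun j' _ => h1 j'), Finset.sum_ite_eq']
    simp only [Finset.mem_filter, Finset.mem_univ, true_and, Fin.lt_def]
  have hu0' : ∀ l : Fin m, u l 0 j k₀ =
      -(if j.1 = l.1 then (1:ℤ) else 0) + (if l.1 < j.1 then a j.1 l.1 k₀.1 else 0) := by
    intro l
    rw [hu0 l]
    simp only [Pi.add_apply, Pi.neg_apply]
    rw [sum_gbE_apply, hfil l]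
  have huk' : ∀ (l : Fin m) (k : Fin (n l.1)), u l k.succ j k₀ =
      if j.1 = l.1 ∧ k₀.1 = k.1 then (1:ℤ) else 0 := by
    intro l k; rw [huk l k, gbE_apply]
  -- LHS
  simp only [Finset.sum_apply, Pi.add_apply, Pi.smul_apply, smul_eq_mul]
  rw [Fin.sum_univ_succ]
  simp only [hu0', huk']
  have hsum : ∀ (c : ℕ) (g : ℕ → ℤ),
      ∑ x : Fin (n c), (g x.1 * if j.1 = c ∧ k₀.1 = x.1 then (1:ℤ) else 0)
      = if j.1 = c then g k₀.1 else 0 := by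
    intro c g
    by_cases h : j.1 = c
    · simp only [h, true_and, if_pos, mul_ite, mul_one, mul_zero]
      exact sum_ite_fin _ _ (h ▸ k₀.2) g
    · simp [h]
  have hL : ∑ x : Fin (n p), (if j.1 = p ∧ k₀.1 = x.1 then (1:ℤ) else 0)
      = if j.1 = p then 1 else 0 := by simpa using hsum p (fun _ => 1)
  have hinner : ∀ x : ℕ,
      (∑ x1 : Fin (n (p + x)), (b p x x1.1 - gbmu (n (p + x)) (b p x)) *
        if j.1 = p + x ∧ k₀.1 = x1.1 then (1:ℤ) else 0)
      = if j.1 = p + x then b p x k₀.1 - gbmu (n (p + x)) (b p x) else 0 :=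
    fun x => hsum (p + x) (fun t => b p x t - gbmu (n (p + x)) (b p x))
  simp only [hinner, hL]
  rw [Finset.sum_attach (Finset.Icc 1 (m - 1 - p)) (fun x =>
    -gbmu (n (p + x)) (b p x) *
        ((-if j.1 = p + x then (1:ℤ) else 0) + if p + x < j.1 then a j.1 (p + x) k₀.1 else 0) +
      if j.1 = p + x then b p x k₀.1 - gbmu (n (p + x)) (b p x) else 0)]
  rw [neg_add_cancel_comm]
  by_cases hj : p < j.1
  · -- j = p + Q
    obtain ⟨Q, hQ⟩ : ∃ Q, (j : ℕ) = p + Q := ⟨j.1 - p, by omega⟩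
    have hJm : (j : ℕ) < m := j.2
    have hQ1 : 1 ≤ Q := by omega
    have hQM : Q ≤ m - 1 - p := by omega
    have hF : ∀ x ∈ Finset.Icc 1 (m - 1 - p),
        (-gbmu (n (p + x)) (b p x) *
          ((-if (j : ℕ) = p + x then (1:ℤ) else 0) + if p + x < (j : ℕ) then a j.1 (p + x) k₀.1 else 0) +
          if (j : ℕ) = p + x then b p x k₀.1 - gbmu (n (p + x)) (b p x) else 0)
        = (if x = Q then b p Q k₀.1 else 0) +
          (if x ∈ Finset.Icc 1 (Q - 1) then -gbmu (n (p + x)) (b p x) * a j.1 (p + x) k₀.1 else 0) := by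
      intro x hx
      rw [Finset.mem_Icc] at hx
      rcases lt_trichotomy x Q with h | h | h
      · have c1 : (j : ℕ) ≠ p + x := by omega
        have c2 : p + x < (j : ℕ) := by omega
        have c3 : x ≠ Q := by omega
        have c4 : x ∈ Finset.Icc 1 (Q - 1) := Finset.mem_Icc.mpr (by omega)
        simp only [if_neg c1, if_pos c2, if_neg c3, if_pos c4]
        ring
      · subst h
        have c1 : (j : ℕ) = p + x := by omega
        have c2 : ¬ (p + x < (j : ℕ)) := by omega
        have c4 : x ∉ Finset.Icc 1 (x - 1) := by
          simp only [Finset.mem_Icc]; omega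
        simp only [if_pos c1, if_neg c2, if_neg c4, eq_self_iff_true, if_true]
        ring
      · have c1 : (j : ℕ) ≠ p + x := by omega
        have c2 : ¬ (p + x < (j : ℕ)) := by omega
        have c3 : x ≠ Q := by omega
        have c4 : x ∉ Finset.Icc 1 (Q - 1) := by
          simp only [Finset.mem_Icc]; omega
        simp only [if_neg c1, if_neg c2, if_neg c3, if_neg c4]
        ring
    rw [Finset.sum_congr rfl hF, Finset.sum_add_distrib, Finset.sum_ite_eq',
      Finset.sum_ite_mem, Finset.inter_eq_right.mpr (Finset.Icc_subset_Icc_right (by omega))]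
    rw [if_pos hj, if_pos (Finset.mem_Icc.mpr ⟨hQ1, hQM⟩)]
    have hbQ : b p Q k₀.1 = a j.1 p k₀.1 +
        ∑ r ∈ Finset.Icc 1 (Q - 1), gbmu (n (p + r)) (b p r) * a j.1 (p + r) k₀.1 := by
      have hk : k₀.1 < n (p + Q) := by rw [← hQ]; exact k₀.2
      rcases eq_or_lt_of_le hQ1 with h1 | h2
      · subst h1
        have e := hb1 p k₀.1 (by omega) (by simpa using hk)
        have hS : ∑ r ∈ Finset.Icc 1 (1 - 1), gbmu (n (p + r)) (b p r) * a j.1 (p + r) k₀.1 = 0 := by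
          simp
        have e' : a j.1 p k₀.1 = a (p + 1) p k₀.1 := congrArg (fun t => a t p k₀.1) hQ
        rw [hS, add_zero, e']
        exact e
      · have e := hbq p Q k₀.1 (by omega) (by omega) hk
        rw [← hQ] at e
        exact e
    rw [hbQ]
    have hneg : ∑ x ∈ Finset.Icc 1 (Q - 1), -gbmu (n (p + x)) (b p x) * a j.1 (p + x) k₀.1
        = -∑ x ∈ Finset.Icc 1 (Q - 1), gbmu (n (p + x)) (b p x) * a j.1 (p + x) k₀.1 := by
      rw [← Finset.sum_neg_distrib]
      exact Finset.sum_congr rfl fun _ _ => neg_mul _ _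
    rw [hneg]
    ring
  · rw [if_neg hj]
    symm
    apply Finset.sum_eq_zero
    intro x hx
    have hx1 := (Finset.mem_Icc.mp hx).1
    have c1 : (j:ℕ) ≠ p + x := by omega
    have c2 : ¬ (p + x < (j:ℕ)) := by omega
    simp [c1, c2]
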